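/- For every β > 0, R > 0 and saturation threshold s = 1, there exist finite subsets x ⊆ y of the Euclidean plane ℝ² and a point u ∈ ℝ² with u ∉ y such that the Geyer saturation conditional intensity λ(u|z) = β·γ^{E_1(u,z)} satisfies: for every γ > 1, λ(u|x) > λ(u|y) (so the Geyer model with γ > 1 is not attractive), and for every γ ∈ (0, 1), λ(u|x) < λ(u|y) (so the Geyer model with γ < 1 is not repulsive). -/

import Mathlib

open scoped Classical

/-- The neighbour count `D_R(u, z) = #{w ∈ z \ {u} : d(u, w) ≤ R}`. -/
noncomputable def neighborCount {S : Type*} [MetricSpace S]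
    (R : ℝ) (u : S) (z : Finset S) : ℕ :=
  ((z.erase u).filter (fun w => dist u w ≤ R)).card

/-- The Geyer exponent
`E_s(u,x) = min(s, D_R(u,x)) + Σ_{y∈x}(min(s, D_R(y, x∪{u})) − min(s, D_R(y,x)))`. -/
noncomputable def geyerExp {S : Type*} [MetricSpace S]
    (R : ℝ) (s : ℕ) (u : S) (x : Finset S) : ℤ :=
  (min s (neighborCount R u x) : ℤ) +
    ∑ y ∈ x, ((min s (neighborCount R y (insert u x)) : ℤ) -
      (min s (neighborCount R y x) : ℤ))

/-- The Geyer saturation model with saturation threshold `s = 1` is neither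
attractive for `γ > 1` nor repulsive for `γ < 1`: in the Euclidean plane there
are finite configurations `x ⊆ y` and a location `u ∉ y` such that the Geyer
conditional intensity `λ(u|z) = β·γ^{E_1(u,z)}` satisfies `λ(u|x) > λ(u|y)`
for every `γ > 1`, and `λ(u|x) < λ(u|y)` for every `0 < γ < 1`. -/
theorem geyer_not_attractive_not_repulsive (β R : ℝ) (hβ : 0 < β) (hR : 0 < R) :
    ∃ (x y : Finset (EuclideanSpace ℝ (Fin 2))) (u : EuclideanSpace ℝ (Fin 2)),
      x ⊆ y ∧ u ∉ y ∧
      (∀ γ : ℝ, 1 < γ → β * γ ^ geyerExp R 1 u x > β * γ ^ geyerExp R 1 u y) ∧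
      (∀ γ : ℝ, 0 < γ → γ < 1 → β * γ ^ geyerExp R 1 u x < β * γ ^ geyerExp R 1 u y) := by
  classical
  letI : DecidableEq (EuclideanSpace ℝ (Fin 2)) := fun a b => Classical.propDecidable (a = b)
  set v : EuclideanSpace ℝ (Fin 2) := EuclideanSpace.single 0 1 with hv
  have hnv : ‖v‖ = 1 := by simp [hv]
  set p : ℝ → EuclideanSpace ℝ (Fin 2) := fun t => t • v with hp
  have hdist : ∀ s t : ℝ, dist (p s) (p t) = |s - t| := by
    intro s t
    rw [dist_eq_norm]
    show ‖s • v - t • v‖ = |s - t|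
    rw [← sub_smul, norm_smul, hnv, mul_one, Real.norm_eq_abs]
  have hinj : Function.Injective p := by
    intro s t h
    have h1 := hdist s t
    rw [h, dist_self] at h1
    have h2 := abs_eq_zero.mp h1.symm
    linarith
  set u := p 0 with hu
  set a := p R with ha
  set b := p (2*R) with hb
  have hua : u ≠ a := fun h => by have := hinj h; linarith
  have hub : u ≠ b := fun h => by have := hinj h; linarith
  have hab : a ≠ b := fun h => by have := hinj h; linarith
  have dua : dist u a = R := by rw [hdist]; rw [abs_of_nonpos (by linarith)]; ring
  have dau : dist a u = R := by rw [dist_comm]; exact dua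
  have dub : dist u b = 2*R := by rw [hdist]; rw [abs_of_nonpos (by linarith)]; ring
  have dbu : dist b u = 2*R := by rw [dist_comm]; exact dub
  have dab : dist a b = R := by rw [hdist]; rw [abs_of_nonpos (by linarith)]; ring
  have dba : dist b a = R := by rw [dist_comm]; exact dab
  have h2R : ¬ (2*R ≤ R) := by linarith
  have e1 : ({u, a} : Finset (EuclideanSpace ℝ (Fin 2))).erase a = {u} := by
    ext w
    simp only [Finset.mem_erase, Finset.mem_insert, Finset.mem_singleton]
    constructor
    · rintro ⟨h, h' | h'⟩ <;> [exact h'; exact absurd h' h]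
    · rintro rfl; exact ⟨hua, Or.inl rfl⟩
  have e2 : ({a, b} : Finset (EuclideanSpace ℝ (Fin 2))).erase a = {b} := by
    rw [Finset.erase_insert (by simp [hab])]
  have e3 : ({u, a, b} : Finset (EuclideanSpace ℝ (Fin 2))).erase a = {u, b} := by
    ext w
    simp only [Finset.mem_erase, Finset.mem_insert, Finset.mem_singleton]
    constructor
    · rintro ⟨h, h' | h' | h'⟩
      · exact Or.inl h'
      · exact absurd h' h
      · exact Or.inr h'
    · rintro (rfl | rfl)
      · exact ⟨hua, Or.inl rfl⟩
      · exact ⟨fun h => hab h.symm, Or.inr (Or.inr rfl)⟩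
  have e4 : ({u, a, b} : Finset (EuclideanSpace ℝ (Fin 2))).erase b = {u, a} := by
    ext w
    simp only [Finset.mem_erase, Finset.mem_insert, Finset.mem_singleton]
    constructor
    · rintro ⟨h, h' | h' | h'⟩
      · exact Or.inl h'
      · exact Or.inr h'
      · exact absurd h' h
    · rintro (rfl | rfl)
      · exact ⟨hub, Or.inl rfl⟩
      · exact ⟨hab, Or.inr (Or.inl rfl)⟩
  have e5 : ({a, b} : Finset (EuclideanSpace ℝ (Fin 2))).erase b = {a} := by
    ext w
    simp only [Finset.mem_erase, Finset.mem_insert, Finset.mem_singleton]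
    constructor
    · rintro ⟨h, h' | h'⟩ <;> [exact h'; exact absurd h' h]
    · rintro rfl; exact ⟨hab, Or.inl rfl⟩
  have hx : geyerExp R 1 u {a} = 2 := by
    simp only [geyerExp, Finset.sum_singleton]
    have n1 : neighborCount R u {a} = 1 := by
      rw [neighborCount, Finset.erase_eq_of_notMem (by simp [hua])]
      rw [Finset.filter_singleton, if_pos (by rw [dua])]
      simp
    have n2 : neighborCount R a (insert u {a}) = 1 := by
      rw [neighborCount, e1, Finset.filter_singleton, if_pos (by rw [dau])]
      simp
    have n3 : neighborCount R a ({a} : Finset (EuclideanSpace ℝ (Fin 2))) = 0 := by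
      simp [neighborCount]
    rw [n1, n2, n3]; norm_num
  have hy : geyerExp R 1 u {a, b} = 1 := by
    simp only [geyerExp]
    rw [Finset.sum_insert (by simp [hab]), Finset.sum_singleton]
    have n1 : neighborCount R u {a, b} = 1 := by
      rw [neighborCount, Finset.erase_eq_of_notMem (by simp [hua, hub])]
      rw [Finset.filter_insert, if_pos (by rw [dua]), Finset.filter_singleton,
        if_neg (by rw [dub]; exact h2R)]
      simp [hab]
    have n2 : neighborCount R a (insert u {a, b}) = 2 := by
      rw [neighborCount, e3, Finset.filter_insert, if_pos (by rw [dau]),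
        Finset.filter_singleton, if_pos (by rw [dab])]
      rw [Finset.card_insert_of_notMem (by simp [hub]), Finset.card_singleton]
    have n3 : neighborCount R a ({a, b} : Finset (EuclideanSpace ℝ (Fin 2))) = 1 := by
      rw [neighborCount, e2, Finset.filter_singleton, if_pos (by rw [dab])]
      simp
    have n4 : neighborCount R b (insert u {a, b}) = 1 := by
      rw [neighborCount, e4, Finset.filter_insert, if_neg (by rw [dbu]; exact h2R),
        Finset.filter_singleton, if_pos (by rw [dba])]
      simp
    have n5 : neighborCount R b ({a, b} : Finset (EuclideanSpace ℝ (Fin 2))) = 1 := by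
      rw [neighborCount, e5, Finset.filter_singleton, if_pos (by rw [dba])]
      simp
    rw [n1, n2, n3, n4, n5]; norm_num
  refine ⟨{a}, {a, b}, u, by simp, by simp [hua, hub], ?_, ?_⟩
  · intro γ h1
    rw [hx, hy]
    have hγ0 : (0:ℝ) < γ := by linarith
    have eA : γ ^ (2:ℤ) = γ * γ := by rw [zpow_two]
    have eB : γ ^ (1:ℤ) = γ := zpow_one γ
    rw [eA, eB]
    nlinarith [mul_pos (mul_pos hβ hγ0) (sub_pos.mpr h1)]
  · intro γ h0 h1
    rw [hx, hy]
    have eA : γ ^ (2:ℤ) = γ * γ := by rw [zpow_two]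
    have eB : γ ^ (1:ℤ) = γ := zpow_one γ
    rw [eA, eB]
    nlinarith [mul_pos (mul_pos hβ h0) (sub_pos.mpr h1)]
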